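/- arXiv:2603.17971 — 2 statements merged into one kernel-verified Lean document; each statement's English description precedes it below -/
import Mathlib

section
/- For any real κ and any involution σ (a Hermitian unitary operator with σ² = I) on a finite-dimensional Hilbert space, e^{-κσ} = A(e^{-i(Wσ+bI)} + e^{i(Wσ+bI)}) where A = e^{|κ|}/2, W = (1/2)arccos(e^{-2|κ|}), and b = sign(κ)·W. -/
open Matrix

/-- RBM normalization `A(κ) = e^{|κ|}/2`. -/
noncomputable def Aparam (κ : ℝ) : ℝ := Real.exp |κ| / 2

/-- RBM weight `W(κ) = (1/2) arccos(e^{-2|κ|})`. -/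
noncomputable def Wparam (κ : ℝ) : ℝ := Real.arccos (Real.exp (-2 * |κ|)) / 2

/-- RBM bias `b(κ) = sign(κ) W(κ)`. -/
noncomputable def bparam (κ : ℝ) : ℝ := Real.sign κ * Wparam κ

open scoped Nat

/-- cosh as a power series. -/
lemma hasSum_cosh' (z : ℂ) :
    HasSum (fun k : ℕ => z ^ (2 * k) / ((2 * k)! : ℂ)) (Complex.cosh z) := by
  have h := Complex.hasSum_cos' (-(z * Complex.I))
  rw [Complex.cos_neg, Complex.cos_mul_I] at h
  convert h using 2 with k
  rw [neg_mul, mul_assoc, Complex.I_mul_I, mul_neg_one, neg_neg]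

/-- sinh as a power series. -/
lemma hasSum_sinh' (z : ℂ) :
    HasSum (fun k : ℕ => z ^ (2 * k + 1) / ((2 * k + 1)! : ℂ)) (Complex.sinh z) := by
  have h := (Complex.hasSum_sin' (-(z * Complex.I))).mul_right Complex.I
  rw [Complex.sin_neg, Complex.sin_mul_I] at h
  have h2 : -(Complex.sinh z * Complex.I) * Complex.I = Complex.sinh z := by
    rw [neg_mul, mul_assoc, Complex.I_mul_I, mul_neg_one, neg_neg]
  rw [h2] at h
  convert h using 2 with k
  · rfl
  rw [neg_mul, mul_assoc, Complex.I_mul_I, mul_neg_one, neg_neg,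
    div_mul_cancel₀ _ Complex.I_ne_zero]

set_option maxHeartbeats 1000000 in
/-- Exponential of a scalar multiple of an involution. -/
lemma exp_smul_involution {d : ℕ} (σ : Matrix (Fin d) (Fin d) ℂ)
    (hinv : σ * σ = 1) (z : ℂ) :
    NormedSpace.exp (z • σ) =
      Complex.cosh z • (1 : Matrix (Fin d) (Fin d) ℂ) + Complex.sinh z • σ := by
  letI : SeminormedRing (Matrix (Fin d) (Fin d) ℂ) := Matrix.linftyOpSemiNormedRing
  letI : NormedRing (Matrix (Fin d) (Fin d) ℂ) := Matrix.linftyOpNormedRing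
  letI : NormedAlgebra ℂ (Matrix (Fin d) (Fin d) ℂ) := Matrix.linftyOpNormedAlgebra
  have hsq : σ ^ 2 = 1 := by rw [pow_two, hinv]
  have heven : ∀ k : ℕ, σ ^ (2 * k) = 1 := fun k => by rw [pow_mul, hsq, one_pow]
  have hodd : ∀ k : ℕ, σ ^ (2 * k + 1) = σ := fun k => by rw [pow_succ, heven, one_mul]
  have hexp := NormedSpace.exp_series_hasSum_exp' (𝕂 := ℂ) (z • σ)
  have hc : HasSum (fun k : ℕ => (((2 * k)! : ℂ)⁻¹) • (z • σ) ^ (2 * k))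
      (Complex.cosh z • (1 : Matrix (Fin d) (Fin d) ℂ)) := by
    have := (hasSum_cosh' z).smul_const (1 : Matrix (Fin d) (Fin d) ℂ)
    convert this using 2 with k
    rw [smul_pow, heven, smul_smul, div_eq_inv_mul]
  have hs : HasSum (fun k : ℕ => (((2 * k + 1)! : ℂ)⁻¹) • (z • σ) ^ (2 * k + 1))
      (Complex.sinh z • σ) := by
    have := (hasSum_sinh' z).smul_const σ
    convert this using 2 with k
    rw [smul_pow, hodd, smul_smul, div_eq_inv_mul]
  exact hexp.unique (hc.even_add_odd hs)

set_option maxHeartbeats 1000000 in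
lemma exp_key {d : ℕ} (σ : Matrix (Fin d) (Fin d) ℂ) (hinv : σ * σ = 1) (W b : ℝ) (c : ℂ) :
    NormedSpace.exp (c • (((W : ℝ) : ℂ) • σ + ((b : ℝ) : ℂ) • (1 : Matrix (Fin d) (Fin d) ℂ))) =
      (Complex.exp (c * b) * Complex.cosh (c * W)) • (1 : Matrix (Fin d) (Fin d) ℂ)
        + (Complex.exp (c * b) * Complex.sinh (c * W)) • σ := by
  have harg : c • (((W : ℝ) : ℂ) • σ + ((b : ℝ) : ℂ) • (1 : Matrix (Fin d) (Fin d) ℂ))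
      = (c * W) • σ + (c * b) • (1 : Matrix (Fin d) (Fin d) ℂ) := by
    rw [smul_add, smul_smul, smul_smul]
  rw [harg, Matrix.exp_add_of_commute _ _ (((Commute.one_right σ).smul_left _).smul_right _),
    exp_smul_involution σ hinv, exp_smul_involution 1 (one_mul 1) (c * b),
    ← Complex.cosh_add_sinh (c * b)]
  simp only [add_mul, mul_add, smul_mul_assoc, mul_smul_comm, mul_one, one_mul, smul_smul]
  module

lemma cos_two_Wparam (κ : ℝ) : Real.cos (2 * Wparam κ) = Real.exp (-2 * |κ|) := by
  rw [Wparam, mul_div_cancel₀ _ (two_ne_zero)]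
  exact Real.cos_arccos (by nlinarith [Real.exp_pos (-2 * |κ|)])
    (Real.exp_le_one_iff.mpr (by nlinarith [abs_nonneg κ]))

lemma cosW_sq (κ : ℝ) : Real.cos (Wparam κ) ^ 2 = 1 / 2 + Real.exp (-2 * |κ|) / 2 := by
  rw [Real.cos_sq, cos_two_Wparam]

lemma sinW_sq (κ : ℝ) : Real.sin (Wparam κ) ^ 2 = 1 / 2 - Real.exp (-2 * |κ|) / 2 := by
  have := Real.sin_sq_add_cos_sq (Wparam κ)
  have := cosW_sq κ
  linarith

lemma Wparam_zero : Wparam 0 = 0 := by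
  simp [Wparam, Real.arccos_one]

lemma cos_bparam (κ : ℝ) : Real.cos (bparam κ) = Real.cos (Wparam κ) := by
  rcases lt_trichotomy κ 0 with h | h | h
  · rw [bparam, Real.sign_of_neg h, neg_one_mul, Real.cos_neg]
  · subst h; simp [bparam, Wparam_zero]
  · rw [bparam, Real.sign_of_pos h, one_mul]

lemma sin_bparam (κ : ℝ) : Real.sin (bparam κ) = Real.sign κ * Real.sin (Wparam κ) := by
  rcases lt_trichotomy κ 0 with h | h | h
  · rw [bparam, Real.sign_of_neg h, neg_one_mul, Real.sin_neg, neg_one_mul]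
  · subst h; simp [bparam]
  · rw [bparam, Real.sign_of_pos h, one_mul, one_mul]

lemma rbm_R1 (κ : ℝ) :
    2 * Aparam κ * Real.cos (bparam κ) * Real.cos (Wparam κ) = Real.cosh κ := by
  rw [cos_bparam, Aparam, ← Real.cosh_abs, Real.cosh_eq]
  have h := cosW_sq κ
  have he : Real.exp |κ| * Real.exp (-2 * |κ|) = Real.exp (-|κ|) := by
    rw [← Real.exp_add]; congr 1; ring
  linear_combination Real.exp |κ| * h + he / 2

lemma rbm_R2 (κ : ℝ) :
    2 * Aparam κ * Real.sin (bparam κ) * Real.sin (Wparam κ) = Real.sinh κ := by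
  rcases lt_trichotomy κ 0 with h | h | h
  · rw [sin_bparam, Real.sign_of_neg h, Aparam, abs_of_neg h, Real.sinh_eq]
    have hs := sinW_sq κ
    rw [abs_of_neg h] at hs
    have he : Real.exp (-κ) * Real.exp (-2 * -κ) = Real.exp κ := by
      rw [← Real.exp_add]; congr 1; ring
    linear_combination (-(Real.exp (-κ))) * hs + he / 2
  · subst h; simp [bparam]
  · rw [sin_bparam, Real.sign_of_pos h, Aparam, abs_of_pos h, Real.sinh_eq]
    have hs := sinW_sq κ
    rw [abs_of_pos h] at hs
    have he : Real.exp κ * Real.exp (-2 * κ) = Real.exp (-κ) := by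
      rw [← Real.exp_add]; congr 1; ring
    linear_combination Real.exp κ * hs - he / 2

set_option maxHeartbeats 1000000 in
/-- For any real `κ` and any Hermitian involution `σ`,
`e^{-κσ} = A (e^{-i(Wσ + bI)} + e^{i(Wσ + bI)})`. -/
theorem rbm_decomposition {d : ℕ} (κ : ℝ) (σ : Matrix (Fin d) (Fin d) ℂ)
    (hherm : σ.IsHermitian) (hinv : σ * σ = 1) :
    NormedSpace.exp ((-κ : ℂ) • σ) =
      ((Aparam κ : ℝ) : ℂ) •
        (NormedSpace.exp ((-Complex.I) •
            (((Wparam κ : ℝ) : ℂ) • σ + ((bparam κ : ℝ) : ℂ) • (1 : Matrix (Fin d) (Fin d) ℂ))) +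
         NormedSpace.exp (Complex.I •
            (((Wparam κ : ℝ) : ℂ) • σ + ((bparam κ : ℝ) : ℂ) • (1 : Matrix (Fin d) (Fin d) ℂ)))) := by
  rw [exp_smul_involution σ hinv, exp_key σ hinv, exp_key σ hinv]
  have hch : ∀ x : ℝ, Complex.cosh (Complex.I * x) = ((Real.cos x : ℝ) : ℂ) := fun x => by
    rw [mul_comm, Complex.cosh_mul_I, ← Complex.ofReal_cos]
  have hch' : ∀ x : ℝ, Complex.cosh (-Complex.I * x) = ((Real.cos x : ℝ) : ℂ) := fun x => by
    rw [show -Complex.I * (x : ℂ) = -(Complex.I * x) by ring, Complex.cosh_neg, hch]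
  have hsh : ∀ x : ℝ, Complex.sinh (Complex.I * x) = ((Real.sin x : ℝ) : ℂ) * Complex.I :=
    fun x => by rw [mul_comm, Complex.sinh_mul_I, ← Complex.ofReal_sin]
  have hsh' : ∀ x : ℝ, Complex.sinh (-Complex.I * x) = -(((Real.sin x : ℝ) : ℂ) * Complex.I) :=
    fun x => by
      rw [show -Complex.I * (x : ℂ) = -(Complex.I * x) by ring, Complex.sinh_neg, hsh]
  have heI : ∀ x : ℝ, Complex.exp (Complex.I * x) =
      ((Real.cos x : ℝ) : ℂ) + ((Real.sin x : ℝ) : ℂ) * Complex.I := fun x => by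
    rw [mul_comm, Complex.exp_mul_I, ← Complex.ofReal_cos, ← Complex.ofReal_sin]
  have heI' : ∀ x : ℝ, Complex.exp (-Complex.I * x) =
      ((Real.cos x : ℝ) : ℂ) - ((Real.sin x : ℝ) : ℂ) * Complex.I := fun x => by
    rw [show -Complex.I * (x : ℂ) = ((-x : ℝ) : ℂ) * Complex.I by push_cast; ring,
      Complex.exp_mul_I, ← Complex.ofReal_cos, ← Complex.ofReal_sin, Real.cos_neg, Real.sin_neg]
    push_cast; ring
  have hI : (Complex.I : ℂ) ^ 2 = -1 := Complex.I_sq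
  have hr1 : (2 : ℂ) * (Aparam κ : ℝ) * ((Real.cos (bparam κ) : ℝ) : ℂ) *
      ((Real.cos (Wparam κ) : ℝ) : ℂ) = ((Real.cosh κ : ℝ) : ℂ) := by
    exact_mod_cast congrArg Complex.ofReal (rbm_R1 κ)
  have hr2 : (2 : ℂ) * (Aparam κ : ℝ) * ((Real.sin (bparam κ) : ℝ) : ℂ) *
      ((Real.sin (Wparam κ) : ℝ) : ℂ) = ((Real.sinh κ : ℝ) : ℂ) := by
    exact_mod_cast congrArg Complex.ofReal (rbm_R2 κ)
  match_scalars
  all_goals simp only [hch, hch', hsh, hsh', heI, heI', Complex.cosh_neg, Complex.sinh_neg,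
    ← Complex.ofReal_cosh, ← Complex.ofReal_sinh]
  · linear_combination -hr1
  · linear_combination hr2 - 2 * ((Aparam κ : ℝ) : ℂ) * ((Real.sin (bparam κ) : ℝ) : ℂ) *
      ((Real.sin (Wparam κ) : ℝ) : ℂ) * hI
end

section
/- A Pauli string O with prescribed commutation relations ({O, σⱼ} = 0 and [O, σᵣ] = 0 for r < j) exists if and only if σⱼ cannot be written (up to phase) as a product of a subset of σ₁,…,σ_{j-1}. -/
open Matrix

/-- A single-qubit Pauli label. -/
inductive PauliMat : Type
  | I : PauliMat
  | X : PauliMat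
  | Y : PauliMat
  | Z : PauliMat
  deriving DecidableEq

instance : Fintype PauliMat :=
  ⟨{.I, .X, .Y, .Z}, fun x => by cases x <;> simp⟩

/-- The 2×2 matrix of a single-qubit Pauli operator. -/
noncomputable def PauliMat.mat : PauliMat → Matrix (Fin 2) (Fin 2) ℂ
  | .I => 1
  | .X => !![0, 1; 1, 0]
  | .Y => !![0, -Complex.I; Complex.I, 0]
  | .Z => !![1, 0; 0, -1]

/-- X-part of the binary symplectic encoding of a single Pauli. -/
def PauliMat.ax : PauliMat → ZMod 2
  | .I => 0
  | .X => 1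
  | .Y => 1
  | .Z => 0

/-- Z-part of the binary symplectic encoding of a single Pauli. -/
def PauliMat.bz : PauliMat → ZMod 2
  | .I => 0
  | .X => 0
  | .Y => 1
  | .Z => 1

/-- The matrix of a Pauli string `σ¹ ⊗ ⋯ ⊗ σⁿ` on `n` qubits. -/
noncomputable def PauliString {n : ℕ} (s : Fin n → PauliMat) :
    Matrix (Fin n → Fin 2) (Fin n → Fin 2) ℂ :=
  Matrix.of fun x y => ∏ i, (s i).mat (x i) (y i)

/-- The binary symplectic representation `(b | a) ∈ 𝔽₂ⁿ × 𝔽₂ⁿ` of a Pauli string. -/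
def sympVec {n : ℕ} (s : Fin n → PauliMat) : (Fin n → ZMod 2) × (Fin n → ZMod 2) :=
  (fun i => (s i).bz, fun i => (s i).ax)

/-- The symplectic form `⟨(b|a), (b'|a')⟩ = a·b' + b·a'` on `𝔽₂ⁿ × 𝔽₂ⁿ`. -/
def sympForm {n : ℕ} (u v : (Fin n → ZMod 2) × (Fin n → ZMod 2)) : ZMod 2 :=
  u.2 ⬝ᵥ v.1 + u.1 ⬝ᵥ v.2

namespace CorrAux

def sgn (a b : PauliMat) : ZMod 2 := a.ax * b.bz + a.bz * b.ax

lemma single_comm (a b : PauliMat) :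
    a.mat * b.mat = ((-1 : ℂ) ^ (sgn a b).val) • (b.mat * a.mat) := by
  have h1 : ((1 : ZMod 2)).val = 1 := by decide
  have h2 : ((2 : ZMod 2)).val = 0 := by decide
  have h0 : ((0 : ZMod 2)).val = 0 := by decide
  cases a <;> cases b <;>
    (simp only [sgn, PauliMat.ax, PauliMat.bz, PauliMat.mat]; norm_num [h0, h1, h2])

lemma pauliString_mul {n : ℕ} (s t : Fin n → PauliMat) :
    PauliString s * PauliString t =
      Matrix.of fun x y => ∏ i, ((s i).mat * (t i).mat) (x i) (y i) := by
  ext x y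
  simp only [Matrix.mul_apply, PauliString, Matrix.of_apply, ← Finset.prod_mul_distrib]
  rw [Finset.prod_univ_sum]
  rw [← Fintype.piFinset_univ]

lemma single_sq (a : PauliMat) : a.mat * a.mat = 1 := by
  cases a <;> (simp only [PauliMat.mat]; norm_num) <;> exact Matrix.one_fin_two.symm

lemma pauliString_sq {n : ℕ} (s : Fin n → PauliMat) :
    PauliString s * PauliString s = 1 := by
  rw [pauliString_mul]
  ext x y
  simp only [Matrix.of_apply, single_sq, Matrix.one_apply]
  by_cases h : x = y
  · subst h; simp
  · rw [if_neg h]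
    obtain ⟨i, hi⟩ := Function.ne_iff.1 h
    exact Finset.prod_eq_zero (Finset.mem_univ i) (by simp [Matrix.one_apply, hi])

def negPow : ZMod 2 → ℂ := fun a => (-1 : ℂ) ^ a.val

lemma negPow_add (a b : ZMod 2) : negPow (a + b) = negPow a * negPow b := by
  have h : ∀ c : ZMod 2, c = 0 ∨ c = 1 := by decide
  rcases h a with ha | ha <;> rcases h b with hb | hb <;> subst ha <;> subst hb <;>
    norm_num [negPow, show ((0:ZMod 2)).val = 0 by decide, show ((1:ZMod 2)).val = 1 by decide,
      show ((1:ZMod 2)+1).val = 0 by decide, show ((2:ZMod 2)).val = 0 by decide]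

lemma negPow_sum {α : Type*} (s : Finset α) (v : α → ZMod 2) :
    negPow (∑ i ∈ s, v i) = ∏ i ∈ s, negPow (v i) := by
  classical
  induction s using Finset.induction with
  | empty => simp [negPow, show ((0:ZMod 2)).val = 0 by decide]
  | insert _ _ h ih => rw [Finset.sum_insert h, Finset.prod_insert h, negPow_add, ih]

lemma sympForm_eq_sum {n : ℕ} (s t : Fin n → PauliMat) :
    sympForm (sympVec s) (sympVec t) = ∑ i, sgn (s i) (t i) := by
  simp only [sympForm, sympVec, dotProduct, sgn, ← Finset.sum_add_distrib]

lemma string_comm {n : ℕ} (s t : Fin n → PauliMat) :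
    PauliString s * PauliString t =
      negPow (sympForm (sympVec s) (sympVec t)) • (PauliString t * PauliString s) := by
  rw [pauliString_mul, pauliString_mul, sympForm_eq_sum, negPow_sum]
  ext x y
  simp only [Matrix.of_apply, Matrix.smul_apply, smul_eq_mul, ← Finset.prod_mul_distrib]
  refine Finset.prod_congr rfl fun i _ => ?_
  rw [single_comm (s i) (t i)]
  simp [negPow, mul_comm]

lemma pauliString_ne_zero {n : ℕ} (s t : Fin n → PauliMat) :
    PauliString t * PauliString s ≠ 0 := by
  intro h
  have h2 : (PauliString t * PauliString s) * (PauliString s * PauliString t) = 1 := by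
    rw [mul_assoc, ← mul_assoc (PauliString s), pauliString_sq, one_mul, pauliString_sq]
  rw [h, zero_mul] at h2
  exact zero_ne_one h2

lemma zmod2_cases : ∀ c : ZMod 2, c = 0 ∨ c = 1 := by decide
  
lemma anticomm_iff {n : ℕ} (s t : Fin n → PauliMat) :
    PauliString s * PauliString t = -(PauliString t * PauliString s) ↔
      sympForm (sympVec s) (sympVec t) = 1 := by
  rcases zmod2_cases (sympForm (sympVec s) (sympVec t)) with h | h <;> rw [h]
  · have := string_comm s t
    rw [h] at this
    simp only [negPow, show ((0:ZMod 2)).val = 0 by decide, pow_zero, one_smul] at this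
    rw [this]
    constructor
    · intro he
      exfalso
      apply pauliString_ne_zero s t
      have := add_eq_zero_iff_eq_neg.2 he
      rwa [← two_smul ℂ, smul_eq_zero_iff_right (by norm_num : (2:ℂ) ≠ 0)] at this
    · intro h01; exact absurd h01 (by decide)
  · simp only [iff_true]
    have := string_comm s t
    rw [h] at this
    simpa [negPow, show ((1:ZMod 2)).val = 1 by decide] using this

lemma comm_iff {n : ℕ} (s t : Fin n → PauliMat) :
    PauliString s * PauliString t = PauliString t * PauliString s ↔
      sympForm (sympVec s) (sympVec t) = 0 := by
  rcases zmod2_cases (sympForm (sympVec s) (sympVec t)) with h | h <;> rw [h]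
  · simp only [iff_true]
    have := string_comm s t
    rw [h] at this
    simpa [negPow, show ((0:ZMod 2)).val = 0 by decide] using this
  · have ha := (anticomm_iff s t).2 h
    constructor
    · intro he
      exfalso
      apply pauliString_ne_zero t s
      rw [he]
      rw [he] at ha
      have h2 := add_eq_zero_iff_eq_neg.2 ha
      rwa [← two_smul ℂ, smul_eq_zero_iff_right (by norm_num : (2:ℂ) ≠ 0)] at h2
    · intro h10; exact absurd h10 (by decide)

def fromBits (b a : ZMod 2) : PauliMat :=
  if b = 0 then (if a = 0 then .I else .X) else (if a = 0 then .Z else .Y)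

lemma fromBits_spec : ∀ b a : ZMod 2, (fromBits b a).bz = b ∧ (fromBits b a).ax = a := by
  decide

lemma sympVec_surjective {n : ℕ} : Function.Surjective (sympVec (n := n)) := by
  intro u
  refine ⟨fun i => fromBits (u.1 i) (u.2 i), ?_⟩
  unfold sympVec
  ext i <;> simp [fromBits_spec (u.1 i) (u.2 i) |>.1, fromBits_spec (u.1 i) (u.2 i) |>.2]

def sympHom {n : ℕ} (u : (Fin n → ZMod 2) × (Fin n → ZMod 2)) :
    ((Fin n → ZMod 2) × (Fin n → ZMod 2)) →ₗ[ZMod 2] ZMod 2 where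
  toFun v := sympForm u v
  map_add' v w := by
    simp [sympForm, dotProduct_add, Prod.fst_add, Prod.snd_add]; ring
  map_smul' c v := by
    simp [sympForm, dotProduct_smul, Prod.smul_fst, Prod.smul_snd, smul_eq_mul]; ring

lemma symp_of_dual {n : ℕ} (f : ((Fin n → ZMod 2) × (Fin n → ZMod 2)) →ₗ[ZMod 2] ZMod 2)
    (v : (Fin n → ZMod 2) × (Fin n → ZMod 2)) :
    sympForm ((fun i => f (0, Pi.single i 1)), (fun i => f (Pi.single i 1, 0))) v = f v := by
  have hv : v = (∑ i, v.1 i • ((Pi.single i 1 : Fin n → ZMod 2), (0 : Fin n → ZMod 2)))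
      + ∑ i, v.2 i • ((0 : Fin n → ZMod 2), (Pi.single i 1 : Fin n → ZMod 2)) := by
    refine Prod.ext ?_ ?_ <;>
      simp [Prod.fst_sum, Prod.snd_sum, ← Pi.single_smul, Finset.univ_sum_single]
  conv_rhs => rw [hv]
  rw [map_add, map_sum, map_sum]
  simp only [_root_.map_smul, smul_eq_mul]
  simp [sympForm, dotProduct, mul_comm]

lemma exists_symp_iff {j n : ℕ} (σv : Fin j → (Fin n → ZMod 2) × (Fin n → ZMod 2))
    (τv : (Fin n → ZMod 2) × (Fin n → ZMod 2)) :
    (∃ u, sympForm u τv = 1 ∧ ∀ i, sympForm u (σv i) = 0) ↔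
      ¬ ∃ S : Finset (Fin j), τv = ∑ i ∈ S, σv i := by
  constructor
  · rintro ⟨u, h1, h0⟩ ⟨S, hS⟩
    have : sympForm u τv = 0 := by
      have := map_sum (sympHom u) σv S
      simp only [sympHom, LinearMap.coe_mk, AddHom.coe_mk] at this
      rw [hS, this, Finset.sum_congr rfl fun i _ => h0 i, Finset.sum_const, smul_zero]
    rw [h1] at this; exact absurd this (by decide)
  · intro hns
    -- τv not in span of the σv
    have hτ : τv ∉ Submodule.span (ZMod 2) (Set.range σv) := by
      intro hmem
      obtain ⟨c, hc⟩ := (Submodule.mem_span_range_iff_exists_fun (ZMod 2)).1 hmem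
      apply hns
      refine ⟨Finset.univ.filter fun i => c i = 1, ?_⟩
      rw [← hc, Finset.sum_filter]
      refine (Finset.sum_congr rfl fun i _ => ?_).symm
      rcases zmod2_cases (c i) with h | h <;> simp [h]
    set M := Submodule.span (ZMod 2) (Set.range σv) with hM
    have hq : M.mkQ τv ≠ 0 := by
      simpa [Submodule.Quotient.mk_eq_zero] using hτ
    obtain ⟨g, hg⟩ : ∃ g : Module.Dual (ZMod 2) (_ ⧸ M), g (M.mkQ τv) ≠ 0 := by
      by_contra hcon
      push_neg at hcon
      exact hq ((Module.forall_dual_apply_eq_zero_iff (ZMod 2) _).1 hcon)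
    set f : ((Fin n → ZMod 2) × (Fin n → ZMod 2)) →ₗ[ZMod 2] ZMod 2 := g.comp M.mkQ with hf
    have hfτ : f τv = 1 := by
      rcases zmod2_cases (f τv) with h | h
      · exact absurd h hg
      · exact h
    have hfσ : ∀ i, f (σv i) = 0 := by
      intro i
      have : σv i ∈ M := Submodule.subset_span ⟨i, rfl⟩
      simp [hf, LinearMap.comp_apply, (Submodule.Quotient.mk_eq_zero M).2 this]
    -- build u from f
    refine ⟨(fun i => f (0, Pi.single i 1), fun i => f (Pi.single i 1, 0)), ?_, ?_⟩
    · rw [symp_of_dual f]; exact hfτ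
    · intro i; rw [symp_of_dual f]; exact hfσ i

end CorrAux

open CorrAux in
/-- A Pauli string `O` with `{O, σⱼ} = 0` and `[O, σᵣ] = 0` for all `r < j` exists
if and only if `σⱼ` cannot be written (up to phase) as a product of a subset of
`σ₁, …, σ_{j-1}`, i.e. iff its symplectic vector is not a sum of a subset of theirs. -/
theorem correction_operator_exists_iff {n j : ℕ}
    (σs : Fin j → (Fin n → PauliMat)) (τ : Fin n → PauliMat) :
    (∃ O : Fin n → PauliMat,
      PauliString O * PauliString τ = -(PauliString τ * PauliString O) ∧
      ∀ i : Fin j,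
        PauliString O * PauliString (σs i) = PauliString (σs i) * PauliString O) ↔
    ¬ ∃ S : Finset (Fin j), sympVec τ = ∑ i ∈ S, sympVec (σs i) := by
  have h := exists_symp_iff (fun i => sympVec (σs i)) (sympVec τ)
  constructor
  · rintro ⟨O, hA, hC⟩
    exact h.1 ⟨sympVec O, (anticomm_iff O τ).1 hA, fun i => (comm_iff O (σs i)).1 (hC i)⟩
  · intro hns
    obtain ⟨u, h1, h0⟩ := h.2 hns
    obtain ⟨O, rfl⟩ := sympVec_surjective u
    exact ⟨O, (anticomm_iff O τ).2 h1, fun i => (comm_iff O (σs i)).2 (h0 i)⟩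
end
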